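/- Let Y be an ℕ-valued random variable on a probability space with finite expectation, and let d ≥ 1 be an integer. Then E[ dY/(Y+d−1) · 1_{Y ≥ 1} ] ≤ d·(1 − E[(1−1/d)^Y]) ≤ E[min(d, Y)] ≤ E[Y]. -/

import Mathlib

open MeasureTheory

lemma aux43 (d y : ℕ) (hd : 1 ≤ d) (hy : 1 ≤ y) :
    (d : ℝ) * y / ((y : ℝ) + d - 1) ≤ (d : ℝ) * (1 - (1 - 1/(d:ℝ)) ^ y) := by
  have hd1 : (1:ℝ) ≤ d := by exact_mod_cast hd
  have hy1 : (1:ℝ) ≤ y := by exact_mod_cast hy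
  have hD : (0:ℝ) < (y:ℝ) + d - 1 := by linarith
  rcases eq_or_lt_of_le hd1 with h1 | h2
  · have hr0 : (1 - 1/(d:ℝ)) = 0 := by rw [← h1]; norm_num
    rw [hr0, zero_pow (by omega : y ≠ 0), ← h1]
    rw [one_mul, one_mul]
    have : (y:ℝ) + 1 - 1 = y := by ring
    rw [this, div_self (by linarith)]
    norm_num
  · have he : (0:ℝ) < (d:ℝ) - 1 := by linarith
    have hdpos : (0:ℝ) < d := by linarith
    have hb := one_add_mul_le_pow (a := 1/((d:ℝ)-1)) (by have hp := one_div_pos.mpr he; linarith) y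
    have h1a : (1:ℝ) + 1/((d:ℝ)-1) = (d:ℝ)/((d:ℝ)-1) := by field_simp; ring
    have h1b : (1:ℝ) + (y:ℝ) * (1/((d:ℝ)-1)) = ((y:ℝ)+d-1)/((d:ℝ)-1) := by field_simp; ring
    rw [h1a, h1b] at hb
    have hBpos : (0:ℝ) < ((y:ℝ)+d-1)/((d:ℝ)-1) := by positivity
    have hinv : (((d:ℝ)/((d:ℝ)-1))^y)⁻¹ ≤ (((y:ℝ)+d-1)/((d:ℝ)-1))⁻¹ :=
      inv_anti₀ hBpos hb
    have hA : (((d:ℝ)/((d:ℝ)-1))^y)⁻¹ = (((d:ℝ)-1)/(d:ℝ))^y := by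
      rw [← inv_pow, inv_div]
    have hBinv : (((y:ℝ)+d-1)/((d:ℝ)-1))⁻¹ = ((d:ℝ)-1)/((y:ℝ)+d-1) := inv_div _ _
    rw [hA, hBinv] at hinv
    have hr : (1:ℝ) - 1/(d:ℝ) = ((d:ℝ)-1)/(d:ℝ) := by field_simp
    rw [hr]
    have heq : ((d:ℝ)-1)/((y:ℝ)+d-1) = 1 - (y:ℝ)/((y:ℝ)+d-1) := by field_simp; ring
    have : (y:ℝ)/((y:ℝ)+d-1) ≤ 1 - (((d:ℝ)-1)/(d:ℝ))^y := by
      rw [heq] at hinv; linarith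
    calc (d:ℝ) * y / ((y:ℝ)+d-1) = (d:ℝ) * ((y:ℝ)/((y:ℝ)+d-1)) := by ring
    _ ≤ (d:ℝ) * (1 - (((d:ℝ)-1)/(d:ℝ))^y) := by
        exact mul_le_mul_of_nonneg_left this hdpos.le

lemma aux32 (d y : ℕ) (hd : 1 ≤ d) :
    (d : ℝ) * (1 - (1 - 1/(d:ℝ)) ^ y) ≤ min (d:ℝ) (y:ℝ) := by
  have hd1 : (1:ℝ) ≤ d := by exact_mod_cast hd
  have hdpos : (0:ℝ) < d := by linarith
  have hr0 : (0:ℝ) ≤ 1 - 1/(d:ℝ) := by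
    have : 1/(d:ℝ) ≤ 1 := by rw [div_le_one hdpos]; exact hd1
    linarith
  apply le_min
  · have : (0:ℝ) ≤ (1 - 1/(d:ℝ))^y := by positivity
    nlinarith
  · have hb := one_add_mul_le_pow (a := -(1/(d:ℝ))) (by nlinarith [one_div_pos.mpr hdpos] : (-2:ℝ) ≤ -(1/(d:ℝ))) y
    have h1 : (1:ℝ) + -(1/(d:ℝ)) = 1 - 1/(d:ℝ) := by ring
    rw [h1] at hb
    have hdy : (d:ℝ) * ((y:ℝ)/(d:ℝ)) = y := by field_simp
    have h2 : (y:ℝ) * -(1/(d:ℝ)) = -((y:ℝ)/(d:ℝ)) := by ring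
    have h3 : 1 - (1 - 1/(d:ℝ))^y ≤ (y:ℝ)/(d:ℝ) := by linarith
    have h4 := mul_le_mul_of_nonneg_left h3 hdpos.le
    rw [hdy] at h4
    exact h4

/-- Ordering of the induced offspring means: for an ℕ-valued integrable
random variable `Y` and an integer `d ≥ 1`,
`E[dY/(Y+d-1)·1_{Y≥1}] ≤ d(1 - E[(1-1/d)^Y]) ≤ E[min(d,Y)] ≤ E[Y]`,
i.e. `μ⁽⁴⁾ ≤ μ⁽³⁾ ≤ μ⁽²⁾ ≤ μ⁽¹⁾` for the dispersal mechanisms D4–D1. -/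
theorem ordering_of_offspring_means {Ω : Type*} [MeasurableSpace Ω]
    (μ : Measure Ω) [IsProbabilityMeasure μ]
    (Y : Ω → ℕ) (hY : Measurable Y)
    (hint : Integrable (fun ω => (Y ω : ℝ)) μ)
    (d : ℕ) (hd : 1 ≤ d) :
    (∫ ω, (if 1 ≤ Y ω then (d : ℝ) * (Y ω : ℝ) / ((Y ω : ℝ) + (d : ℝ) - 1) else 0) ∂μ)
        ≤ (d : ℝ) * (1 - ∫ ω, (1 - 1 / (d : ℝ)) ^ (Y ω) ∂μ) ∧
    (d : ℝ) * (1 - ∫ ω, (1 - 1 / (d : ℝ)) ^ (Y ω) ∂μ)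
        ≤ (∫ ω, (min (d : ℝ) (Y ω : ℝ)) ∂μ) ∧
    (∫ ω, (min (d : ℝ) (Y ω : ℝ)) ∂μ) ≤ ∫ ω, (Y ω : ℝ) ∂μ := by
  have hd1 : (1:ℝ) ≤ d := by exact_mod_cast hd
  have hdpos : (0:ℝ) < d := by linarith
  have hr0 : (0:ℝ) ≤ 1 - 1/(d:ℝ) := by
    have : 1/(d:ℝ) ≤ 1 := by rw [div_le_one hdpos]; exact hd1
    linarith
  have hr1 : 1 - 1/(d:ℝ) ≤ 1 := by
    have : (0:ℝ) ≤ 1/(d:ℝ) := by positivity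
    linarith
  -- measurability helpers
  have mY : ∀ (g : ℕ → ℝ), Measurable (fun ω => g (Y ω)) :=
    fun g => (measurable_from_top (f := g)).comp hY
  -- integrability of r^Y
  have m3 : Integrable (fun ω => (1 - 1/(d:ℝ)) ^ (Y ω)) μ := by
    apply (integrable_const (1:ℝ)).mono'
      (mY (fun n => (1 - 1/(d:ℝ))^n)).aestronglyMeasurable
    filter_upwards with ω
    rw [Real.norm_eq_abs, abs_of_nonneg (by positivity)]
    exact pow_le_one₀ hr0 hr1
  have m3' : Integrable (fun ω => (d:ℝ) * (1 - (1 - 1/(d:ℝ)) ^ (Y ω))) μ :=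
    (((integrable_const (1:ℝ)).sub m3).const_mul _)
  -- integrability of f4
  have m4 : Integrable (fun ω => (if 1 ≤ Y ω then (d : ℝ) * (Y ω : ℝ) / ((Y ω : ℝ) + (d : ℝ) - 1) else 0)) μ := by
    apply (integrable_const (d:ℝ)).mono'
      (mY (fun n => if 1 ≤ n then (d:ℝ) * n / ((n:ℝ) + d - 1) else 0)).aestronglyMeasurable
    filter_upwards with ω
    by_cases h : 1 ≤ Y ω
    · simp only [h, if_true]
      have hy1 : (1:ℝ) ≤ (Y ω : ℝ) := by exact_mod_cast h
      have hD : (0:ℝ) < (Y ω : ℝ) + d - 1 := by linarith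
      rw [Real.norm_eq_abs, abs_of_nonneg (by positivity)]
      rw [div_le_iff₀ hD]
      nlinarith
    · simp [h, hdpos.le]
  -- integrability of min
  have m2 : Integrable (fun ω => min (d:ℝ) (Y ω : ℝ)) μ := by
    apply hint.mono' (mY (fun n => min (d:ℝ) (n:ℝ))).aestronglyMeasurable
    filter_upwards with ω
    rw [Real.norm_eq_abs, abs_of_nonneg (le_min hdpos.le (Nat.cast_nonneg _))]
    exact min_le_right _ _
  -- value of the D3 integral
  have hI3 : ∫ ω, (d:ℝ) * (1 - (1 - 1/(d:ℝ)) ^ (Y ω)) ∂μ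
      = (d:ℝ) * (1 - ∫ ω, (1 - 1/(d:ℝ)) ^ (Y ω) ∂μ) := by
    rw [integral_const_mul, integral_sub (integrable_const 1) m3, integral_const]
    simp
  refine ⟨?_, ?_, ?_⟩
  · rw [← hI3]
    apply integral_mono m4 m3'
    intro ω
    by_cases h : 1 ≤ Y ω
    · simp only [h, if_true]
      exact aux43 d (Y ω) hd h
    · have h0 : Y ω = 0 := by omega
      simp [h, h0]
  · rw [← hI3]
    apply integral_mono m3' m2
    intro ω
    exact aux32 d (Y ω) hd
  · apply integral_mono m2 hint
    intro ω
    exact min_le_right _ _
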